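/- For all reals θ ∈ (0, 1/2) and τ ∈ (0, 1/2): h(θ) + h( 1/2 − (1/2 − τ)·√(1 − 2θ) ) − h( 1/2 − (1/2)·√(1 − 2θ) ) − h( τ + (1 − 2τ)·θ ) > 0. -/
import Mathlib
set_option maxHeartbeats 800000

/-- The binary entropy function `h(x) = −x·log x − (1−x)·log(1−x)` (natural log). -/
noncomputable def binEnt (x : ℝ) : ℝ :=
  -x * Real.log x - (1 - x) * Real.log (1 - x)

lemma binEnt_eq (x : ℝ) : binEnt x = Real.binEntropy x := by
  simp [binEnt, Real.binEntropy, Real.log_inv]; ring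

/-- for all reals `θ ∈ (0,1/2)` and `τ ∈ (0,1/2)`:
`h(θ) + h(1/2 − (1/2 − τ)·√(1 − 2θ)) − h(1/2 − (1/2)·√(1 − 2θ)) − h(τ + (1 − 2τ)·θ) > 0`. -/
theorem binary_entropy_gap_positive
    (θ τ : ℝ) (hθ : θ ∈ Set.Ioo (0 : ℝ) (1 / 2)) (hτ : τ ∈ Set.Ioo (0 : ℝ) (1 / 2)) :
    0 < binEnt θ + binEnt (1 / 2 - (1 / 2 - τ) * Real.sqrt (1 - 2 * θ))
        - binEnt (1 / 2 - (1 / 2) * Real.sqrt (1 - 2 * θ))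
        - binEnt (τ + (1 - 2 * τ) * θ) := by
  obtain ⟨hθ0, hθ1⟩ := hθ
  obtain ⟨hτ0, hτ1⟩ := hτ
  set s : ℝ := Real.sqrt (1 - 2 * θ) with hs
  have h2θ : (0 : ℝ) < 1 - 2 * θ := by linarith
  have hs0 : 0 < s := Real.sqrt_pos.2 h2θ
  have hs1 : s < 1 := by
    have := Real.sqrt_lt_sqrt (by linarith : (0:ℝ) ≤ 1 - 2 * θ) (by linarith : 1 - 2 * θ < 1)
    simpa using this
  have hssq : s ^ 2 = 1 - 2 * θ := Real.sq_sqrt h2θ.le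
  set F : ℝ → ℝ := fun ε => Real.binEntropy (1 / 2 - ε * s)
      - Real.binEntropy (1 / 2 - ε * s ^ 2) with hF
  -- F is strictly decreasing on [1/2 - τ, 1/2]
  have hanti : StrictAntiOn F (Set.Icc (1 / 2 - τ) (1 / 2)) := by
    apply strictAntiOn_of_deriv_neg (convex_Icc _ _)
    · apply ContinuousOn.sub
      · exact (Real.binEntropy_continuous.comp
          (continuous_const.sub (continuous_id.mul continuous_const))).continuousOn
      · exact (Real.binEntropy_continuous.comp
          (continuous_const.sub (continuous_id.mul continuous_const))).continuousOn
    · intro ε hε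
      rw [interior_Icc] at hε
      obtain ⟨hε0, hε1⟩ := hε
      have hε0' : 0 < ε := by linarith
      have hεs : ε * s < 1 / 2 := by nlinarith
      have hεs2 : ε * s ^ 2 < 1 / 2 := by nlinarith
      have hεs0 : 0 < ε * s := by positivity
      have hεs20 : 0 < ε * s ^ 2 := by positivity
      have inner1 : HasDerivAt (fun ε : ℝ => 1 / 2 - ε * s) (-s) ε := by
        have h := (hasDerivAt_const ε ((1:ℝ)/2)).sub ((hasDerivAt_id' ε).mul_const s)
        rw [show -s = 0 - 1 * s by ring]; exact h
      have inner2 : HasDerivAt (fun ε : ℝ => 1 / 2 - ε * s ^ 2) (-s ^ 2) ε := by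
        have h := (hasDerivAt_const ε ((1:ℝ)/2)).sub ((hasDerivAt_id' ε).mul_const (s ^ 2))
        rw [show -s ^ 2 = 0 - 1 * s ^ 2 by ring]; exact h
      have hd1 : HasDerivAt (fun ε : ℝ => Real.binEntropy (1 / 2 - ε * s))
          ((Real.log (1 - (1/2 - ε*s)) - Real.log (1/2 - ε*s)) * (-s)) ε :=
        (Real.hasDerivAt_binEntropy (by linarith) (by linarith)).comp ε inner1
      have hd2 : HasDerivAt (fun ε : ℝ => Real.binEntropy (1 / 2 - ε * s ^ 2))
          ((Real.log (1 - (1/2 - ε*s^2)) - Real.log (1/2 - ε*s^2)) * (-s ^ 2)) ε :=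
        (Real.hasDerivAt_binEntropy (by linarith) (by linarith)).comp ε inner2
      have hdF : HasDerivAt F
          ((Real.log (1 - (1/2 - ε*s)) - Real.log (1/2 - ε*s)) * (-s)
            - (Real.log (1 - (1/2 - ε*s^2)) - Real.log (1/2 - ε*s^2)) * (-s ^ 2)) ε :=
        hd1.sub hd2
      rw [hdF.deriv]
      -- key inequality
      set A : ℝ := Real.log (1 - (1/2 - ε*s)) - Real.log (1/2 - ε*s) with hA
      set B : ℝ := Real.log (1 - (1/2 - ε*s^2)) - Real.log (1/2 - ε*s^2) with hB
      have hBpos : 0 < B := by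
        rw [hB]
        have : Real.log (1/2 - ε*s^2) < Real.log (1 - (1/2 - ε*s^2)) :=
          Real.log_lt_log (by linarith) (by linarith)
        linarith
      have hAB : B < A := by
        rw [hA, hB]
        have h1 : Real.log (1 - (1/2 - ε*s^2)) < Real.log (1 - (1/2 - ε*s)) :=
          Real.log_lt_log (by linarith) (by nlinarith)
        have h2 : Real.log (1/2 - ε*s) < Real.log (1/2 - ε*s^2) :=
          Real.log_lt_log (by linarith) (by nlinarith)
        linarith
      nlinarith [mul_pos hs0 hBpos]
  have hmem1 : (1/2 - τ) ∈ Set.Icc (1/2 - τ) (1/2 : ℝ) := by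
    constructor <;> linarith
  have hmem2 : (1/2 : ℝ) ∈ Set.Icc (1/2 - τ) (1/2 : ℝ) := by
    constructor <;> linarith
  have key := hanti hmem1 hmem2 (by linarith)
  have e1 : (1:ℝ)/2 - (1/2 - τ) * s ^ 2 = τ + (1 - 2*τ) * θ := by
    rw [hssq]; ring
  have e2 : (1:ℝ)/2 - (1/2) * s ^ 2 = θ := by
    rw [hssq]; ring
  simp only [hF, e1, e2] at key
  rw [binEnt_eq, binEnt_eq, binEnt_eq, binEnt_eq]
  have : (1:ℝ)/2 - (1/2 - τ) * s = 1/2 - (1/2 - τ) * s := rfl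
  linarith [key]
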